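/- Let 0 < α < 1 and β > 0, let φ be an analytic self-map of the open unit disk D, let g be analytic on D, and suppose the operator C_φU_g, defined by (C_φU_g f)(z) = ∫₀^{φ(z)} f(ξ) g'(ξ) dξ, is bounded from Z^α to Z^β. Then C_φU_g is a compact operator from Z^α to Z^β, i.e. its essential norm ‖C_φU_g‖_{e,Z^α→Z^β} equals 0. -/

import Mathlib

noncomputable section

/-- The open unit disk in the complex plane. -/
def uD : Set ℂ := Metric.ball 0 1

/-- The Zygmund-type quantity `(1-|z|^2)^a * |f''(z)|`. -/
def zygS (a : ℝ) (f : ℂ → ℂ) (z : ℂ) : ℝ := (1 - ‖z‖ ^ 2) ^ a * ‖deriv (deriv f) z‖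

/-- Membership in the Zygmund-type space `Z^a`. -/
def memZ (a : ℝ) (f : ℂ → ℂ) : Prop :=
  AnalyticOn ℂ f uD ∧ ∃ M : ℝ, ∀ z ∈ uD, zygS a f z ≤ M

/-- The Zygmund-type norm `‖f‖_{Z^a} = |f 0| + |f' 0| + sup_{z ∈ D} (1-|z|^2)^a |f''(z)|`. -/
def zNorm (a : ℝ) (f : ℂ → ℂ) : ℝ := ‖f 0‖ + ‖deriv f 0‖ + sSup (zygS a f '' uD)

/-- Membership in the weighted space `H^∞_{v_b}` (for `u` analytic on `uD`). -/
def memHv (b : ℝ) (u : ℂ → ℂ) : Prop :=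
  ∃ M : ℝ, ∀ z ∈ uD, (1 - ‖z‖ ^ 2) ^ b * ‖u z‖ ≤ M

/-- `T` is a bounded operator from `Z^a` to `Z^b`. -/
def boundedOp (a b : ℝ) (T : (ℂ → ℂ) → ℂ → ℂ) : Prop :=
  (∀ f, memZ a f → memZ b (T f)) ∧
    ∃ C > 0, ∀ f, memZ a f → zNorm b (T f) ≤ C * zNorm a f

/-- `(C_φ U_g f)(z) = ∫₀^{φ(z)} f(ξ) g'(ξ) dξ`, parametrized along the segment from `0` to `φ z`. -/
def CphiUg (g φ : ℂ → ℂ) (f : ℂ → ℂ) : ℂ → ℂ :=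
  fun z => ∫ t in (0:ℝ)..1, φ z * (f ((t : ℂ) * φ z) * deriv g ((t : ℂ) * φ z))

/-- The weighted sup-quantity `‖u‖_{v_b} = sup_{z ∈ D} (1-|z|^2)^b |u(z)|`. -/
def vNorm (b : ℝ) (u : ℂ → ℂ) : ℝ := sSup ((fun z => (1 - ‖z‖ ^ 2) ^ b * ‖u z‖) '' uD)

/-- Operator norm of `T` viewed as an operator from `Z^a` to `Z^b`. -/
def opNormZ (a b : ℝ) (T : (ℂ → ℂ) → ℂ → ℂ) : ℝ :=
  sSup {r : ℝ | ∃ f, memZ a f ∧ zNorm a f ≤ 1 ∧ r = zNorm b (T f)}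

/-- `K` is a compact (linear) operator from `Z^a` to `Z^b`: it is linear on `Z^a`, maps `Z^a`
into `Z^b`, and every sequence in the closed unit ball of `Z^a` has a subsequence whose image
under `K` is Cauchy in the `Z^b`-norm (equivalently, the image of the unit ball is relatively
compact since `Z^b` is a Banach space). -/
def compactOpZ (a b : ℝ) (K : (ℂ → ℂ) → ℂ → ℂ) : Prop :=
  (∀ f, memZ a f → memZ b (K f)) ∧
  (∀ f h, memZ a f → memZ a h → K (f + h) = K f + K h) ∧
  (∀ (c : ℂ) (f), memZ a f → K (c • f) = c • K f) ∧
  ∀ u : ℕ → ℂ → ℂ, (∀ n, memZ a (u n) ∧ zNorm a (u n) ≤ 1) →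
    ∃ σ : ℕ → ℕ, StrictMono σ ∧
      ∀ ε > 0, ∃ N, ∀ m ≥ N, ∀ n ≥ N,
        zNorm b (fun z => K (u (σ m)) z - K (u (σ n)) z) ≤ ε

/-- The essential norm of `T : Z^a → Z^b`: the distance from `T` to the compact operators. -/
def essNormZ (a b : ℝ) (T : (ℂ → ℂ) → ℂ → ℂ) : ℝ :=
  sInf {r : ℝ | ∃ K, compactOpZ a b K ∧ r = opNormZ a b (fun f z => T f z - K f z)}

open Set Metric MeasureTheory intervalIntegral Filter Topology Complex

lemma uD_open : IsOpen uD := Metric.isOpen_ball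

lemma zero_mem_uD : (0:ℂ) ∈ uD := by simp [uD]

lemma mem_uD_iff {z : ℂ} : z ∈ uD ↔ ‖z‖ < 1 := by
  simp [uD, Metric.mem_ball, dist_eq_norm]

lemma uD_convex : Convex ℝ uD := convex_ball 0 1

lemma smul_mem_uD {t : ℝ} (ht0 : 0 ≤ t) (ht1 : t ≤ 1) {w : ℂ} (hw : w ∈ uD) :
    (t:ℂ) * w ∈ uD := by
  rw [mem_uD_iff] at hw ⊢
  calc ‖(t:ℂ) * w‖ = t * ‖w‖ := by
        rw [norm_mul, Complex.norm_real, Real.norm_eq_abs, _root_.abs_of_nonneg ht0]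
    _ ≤ 1 * ‖w‖ := by gcongr
    _ < 1 := by simpa using hw

lemma memZ_analyticOnNhd {a : ℝ} {f : ℂ → ℂ} (h : memZ a f) : AnalyticOnNhd ℂ f uD :=
  (uD_open.analyticOn_iff_analyticOnNhd).1 h.1

lemma zygS_nonneg {a : ℝ} {f : ℂ → ℂ} {z : ℂ} (hz : z ∈ uD) : 0 ≤ zygS a f z := by
  have h1 : (0:ℝ) ≤ 1 - ‖z‖ ^ 2 := by
    rw [mem_uD_iff] at hz
    nlinarith [norm_nonneg z]
  exact mul_nonneg (Real.rpow_nonneg h1 a) (norm_nonneg _)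

lemma sSup_zygS_nonneg (a : ℝ) (f : ℂ → ℂ) : 0 ≤ sSup (zygS a f '' uD) := by
  apply Real.sSup_nonneg
  rintro x ⟨z, hz, rfl⟩
  exact zygS_nonneg hz

lemma zNorm_nonneg (a : ℝ) (f : ℂ → ℂ) : 0 ≤ zNorm a f := by
  have := sSup_zygS_nonneg a f
  unfold zNorm
  positivity

lemma zygS_le_zNorm {a : ℝ} {f : ℂ → ℂ} (hm : memZ a f) {z : ℂ} (hz : z ∈ uD) :
    zygS a f z ≤ zNorm a f := by
  obtain ⟨M, hM⟩ := hm.2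
  have h1 : zygS a f z ≤ sSup (zygS a f '' uD) := by
    apply le_csSup
    · exact ⟨M, by rintro x ⟨y, hy, rfl⟩; exact hM y hy⟩
    · exact ⟨z, hz, rfl⟩
  have h2 : sSup (zygS a f '' uD) ≤ zNorm a f := by
    unfold zNorm
    have := norm_nonneg (f 0); have := norm_nonneg (deriv f 0)
    linarith
  linarith

lemma eventuallyEq_of_eqOn_uD {F G : ℂ → ℂ} {z : ℂ} (hz : z ∈ uD)
    (h : ∀ y ∈ uD, F y = G y) : F =ᶠ[nhds z] G :=
  Filter.eventually_of_mem (uD_open.mem_nhds hz) h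

lemma deriv2_congr_uD {F G : ℂ → ℂ} {z : ℂ} (hz : z ∈ uD)
    (h : ∀ y ∈ uD, F y = G y) : deriv (deriv F) z = deriv (deriv G) z :=
  ((eventuallyEq_of_eqOn_uD hz h).deriv).deriv_eq
lemma hasDerivAt_line {F : ℂ → ℂ} (hF : AnalyticOnNhd ℂ F uD) (a b : ℂ) {t : ℝ}
    (hin : a + (t:ℂ) * b ∈ uD) :
    HasDerivAt (fun s : ℝ => F (a + (s:ℂ) * b)) (b * deriv F (a + (t:ℂ) * b)) t := by
  have h1 : HasDerivAt (fun s : ℂ => a + s * b) b (t:ℂ) := by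
    simpa using ((hasDerivAt_id ((t:ℂ))).mul_const b).const_add a
  have h2 : HasDerivAt F (deriv F (a + (t:ℂ) * b)) (a + (t:ℂ) * b) :=
    ((hF _ hin).differentiableAt).hasDerivAt
  have h3 : HasDerivAt (fun s : ℂ => F (a + s * b))
      (deriv F (a + (t:ℂ) * b) * b) (t:ℂ) := h2.comp (t:ℂ) h1
  simpa [mul_comm] using h3.comp_ofReal

lemma contOn_line_deriv {F : ℂ → ℂ} (hF : AnalyticOnNhd ℂ F uD) (a b : ℂ) {r₁ r₂ : ℝ}
    (hin : ∀ t ∈ Set.uIcc r₁ r₂, a + (t:ℂ) * b ∈ uD) :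
    ContinuousOn (fun t : ℝ => b * deriv F (a + (t:ℂ) * b)) (Set.uIcc r₁ r₂) := by
  apply ContinuousOn.mul continuousOn_const
  have hc : ContinuousOn (fun t : ℝ => a + (t:ℂ) * b) (Set.uIcc r₁ r₂) := by
    fun_prop
  exact (hF.deriv.continuousOn).comp hc hin

lemma ftc_line {F : ℂ → ℂ} (hF : AnalyticOnNhd ℂ F uD) (a b : ℂ) {r₁ r₂ : ℝ}
    (hin : ∀ t ∈ Set.uIcc r₁ r₂, a + (t:ℂ) * b ∈ uD) :
    ∫ t in r₁..r₂, b * deriv F (a + (t:ℂ) * b)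
      = F (a + (r₂:ℂ) * b) - F (a + (r₁:ℂ) * b) := by
  apply intervalIntegral.integral_eq_sub_of_hasDerivAt
  · intro t ht
    exact hasDerivAt_line hF a b (hin t ht)
  · exact (contOn_line_deriv hF a b hin).intervalIntegrable

lemma chord_mem {w s : ℂ} (hw : w ∈ uD) (hs : s ∈ uD) {t : ℝ}
    (ht : t ∈ Set.uIcc (0:ℝ) 1) : w + (t:ℂ) * (s - w) ∈ uD := by
  rw [Set.uIcc_of_le (zero_le_one)] at ht
  have h := uD_convex hw hs (by linarith [ht.2] : (0:ℝ) ≤ 1 - t) ht.1 (by ring)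
  have : (1 - t) • w + t • s = w + (t:ℂ) * (s - w) := by
    simp only [Complex.real_smul]
    push_cast
    ring
  rwa [this] at h

lemma lip_est {F : ℂ → ℂ} (hF : AnalyticOnNhd ℂ F uD) {w s : ℂ} (hw : w ∈ uD)
    (hs : s ∈ uD) {C : ℝ}
    (hC : ∀ t ∈ Set.uIcc (0:ℝ) 1, ‖deriv F (w + (t:ℂ) * (s - w))‖ ≤ C) :
    ‖F s - F w‖ ≤ C * ‖s - w‖ := by
  have hmem : ∀ t ∈ Set.uIcc (0:ℝ) 1, w + (t:ℂ) * (s - w) ∈ uD :=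
    fun t ht => chord_mem hw hs ht
  have h := ftc_line hF w (s - w) hmem
  have h2 : F (w + (1:ℝ) * (s - w)) = F s := by norm_num
  have h3 : F (w + (0:ℝ) * (s - w)) = F w := by norm_num
  rw [h2, h3] at h
  rw [← h]
  have hb : ∀ t ∈ Set.Ioc (0:ℝ) 1, ‖(s - w) * deriv F (w + (t:ℂ) * (s - w))‖ ≤ ‖s - w‖ * C := by
    intro t ht
    rw [norm_mul]
    have := hC t (by rw [Set.uIcc_of_le zero_le_one]; exact Set.Ioc_subset_Icc_self ht)
    have := norm_nonneg (s - w)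
    nlinarith [norm_nonneg (deriv F (w + (t:ℂ) * (s - w)))]
  calc ‖∫ t in (0:ℝ)..1, (s - w) * deriv F (w + (t:ℂ) * (s - w))‖
      ≤ ‖s - w‖ * C * |1 - 0| := by
        apply intervalIntegral.norm_integral_le_of_norm_le_const
        intro t ht
        rw [Set.uIoc_of_le zero_le_one] at ht
        exact hb t ht
    _ = C * ‖s - w‖ := by simp [mul_comm]
lemma rpow_subadd {x y : ℝ} (hx : 0 ≤ x) (hy : 0 ≤ y) {p : ℝ} (hp0 : 0 ≤ p) (hp1 : p ≤ 1) :
    (x + y) ^ p ≤ x ^ p + y ^ p := by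
  have h := NNReal.rpow_add_le_add_rpow x.toNNReal y.toNNReal hp0 hp1
  have h2 := NNReal.coe_le_coe.2 h
  push_cast at h2
  rwa [Real.coe_toNNReal x hx, Real.coe_toNNReal y hy] at h2

/-- Radial estimate : if `‖F'‖ ≤ (1-‖·‖)^(-α)` on `uD` then
`‖F w - F (r w)‖ ≤ (1-r)^(1-α)/(1-α)`. -/
lemma radial_est {α : ℝ} (hα0 : 0 < α) (hα1 : α < 1) {F : ℂ → ℂ}
    (hF : AnalyticOnNhd ℂ F uD) {w : ℂ} (hw : w ∈ uD)
    (hd : ∀ y ∈ uD, ‖deriv F y‖ ≤ (1 - ‖y‖) ^ (-α)) {r : ℝ} (hr0 : 0 ≤ r) (hr1 : r ≤ 1) :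
    ‖F w - F ((r:ℂ) * w)‖ ≤ (1 - r) ^ (1 - α) / (1 - α) := by
  set c := ‖w‖ with hc
  have hc0 : 0 ≤ c := norm_nonneg w
  have hc1 : c < 1 := mem_uD_iff.1 hw
  have huIcc : Set.uIcc r 1 = Set.Icc r 1 := Set.uIcc_of_le hr1
  have hmem : ∀ t ∈ Set.uIcc r 1, (0:ℂ) + (t:ℂ) * w ∈ uD := by
    intro t ht
    rw [huIcc] at ht
    rw [zero_add]
    exact smul_mem_uD (le_trans hr0 ht.1) ht.2 hw
  have hftc := ftc_line hF 0 w hmem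
  have e1 : (0:ℂ) + (1:ℝ) * w = w := by norm_num
  have e2 : (0:ℂ) + (r:ℝ) * w = (r:ℂ) * w := by norm_num
  rw [e1, e2] at hftc
  rw [← hftc]
  -- bound function
  have hbound : ∀ t ∈ Set.uIcc r 1, ‖w * deriv F ((0:ℂ) + (t:ℂ) * w)‖ ≤ c * (1 - t * c) ^ (-α) := by
    intro t ht
    rw [huIcc] at ht
    have ht0 : 0 ≤ t := le_trans hr0 ht.1
    have hmem' : (t:ℂ) * w ∈ uD := smul_mem_uD ht0 ht.2 hw
    have hnorm : ‖(t:ℂ) * w‖ = t * c := by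
      rw [norm_mul, Complex.norm_real, Real.norm_eq_abs, _root_.abs_of_nonneg ht0]
    rw [zero_add, norm_mul]
    have := hd _ hmem'
    rw [hnorm] at this
    calc c * ‖deriv F ((t:ℂ) * w)‖ ≤ c * (1 - t * c) ^ (-α) := by
          apply mul_le_mul_of_nonneg_left _ hc0
          exact this
      _ = c * (1 - t * c) ^ (-α) := rfl
  -- antiderivative computation
  have hpos : ∀ t ∈ Set.uIcc r 1, (0:ℝ) < 1 - t * c := by
    intro t ht
    rw [huIcc] at ht
    have ht0 : 0 ≤ t := le_trans hr0 ht.1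
    nlinarith [ht.2]
  have hderiv : ∀ t ∈ Set.uIcc r 1,
      HasDerivAt (fun t : ℝ => -(1 - t * c) ^ (1 - α) / (1 - α)) (c * (1 - t * c) ^ (-α)) t := by
    intro t ht
    have h1 : HasDerivAt (fun t : ℝ => 1 - t * c) (-c) t := by
      simpa using ((hasDerivAt_id t).mul_const c).const_sub 1
    have h2 : HasDerivAt (fun x : ℝ => x ^ (1 - α))
        ((1 - α) * (1 - t * c) ^ (1 - α - 1)) (1 - t * c) :=
      Real.hasDerivAt_rpow_const (Or.inl (ne_of_gt (hpos t ht)))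
    have h3 := h2.comp t h1
    have h4 := h3.neg.div_const (1 - α)
    have e : -((1 - α) * (1 - t * c) ^ (1 - α - 1) * -c) / (1 - α) = c * (1 - t * c) ^ (-α) := by
      have hne : (1 - α) ≠ 0 := by linarith
      field_simp
      ring_nf
    rw [e] at h4
    convert h4 using 2 <;> rfl
  have hcont : ContinuousOn (fun t : ℝ => c * (1 - t * c) ^ (-α)) (Set.uIcc r 1) := by
    apply ContinuousOn.mul continuousOn_const
    apply ContinuousOn.rpow_const
    · fun_prop
    · intro t ht
      exact Or.inl (ne_of_gt (hpos t ht))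
  have hint : IntervalIntegrable (fun t : ℝ => c * (1 - t * c) ^ (-α)) volume r 1 :=
    hcont.intervalIntegrable
  have hval : ∫ t in r..1, c * (1 - t * c) ^ (-α)
      = -(1 - 1 * c) ^ (1 - α) / (1 - α) - (-(1 - r * c) ^ (1 - α) / (1 - α)) :=
    intervalIntegral.integral_eq_sub_of_hasDerivAt hderiv hint
  have hae : ∀ᵐ (t : ℝ) ∂(MeasureTheory.volume.restrict (Set.uIoc r 1)), ‖w * deriv F ((0:ℂ) + (t:ℂ) * w)‖ ≤ c * (1 - t * c) ^ (-α) := by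
    rw [MeasureTheory.ae_restrict_iff' measurableSet_uIoc]
    apply Filter.Eventually.of_forall
    intro t ht
    apply hbound
    rw [huIcc]
    rw [Set.uIoc_of_le hr1] at ht
    exact Set.Ioc_subset_Icc_self ht
  have hnorm_le := intervalIntegral.norm_integral_le_abs_of_norm_le hae hint
  have hval2 : ∫ t in r..1, c * (1 - t * c) ^ (-α)
      = ((1 - r * c) ^ (1 - α) - (1 - c) ^ (1 - α)) / (1 - α) := by
    rw [hval, one_mul]
    ring
  have hVnonneg : (0:ℝ) ≤ ∫ t in r..1, c * (1 - t * c) ^ (-α) := by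
    rw [hval2]
    apply div_nonneg _ (by linarith)
    have := Real.rpow_le_rpow (by linarith : (0:ℝ) ≤ 1 - c) (by nlinarith : 1 - c ≤ 1 - r * c) (by linarith : (0:ℝ) ≤ 1 - α)
    linarith
  rw [_root_.abs_of_nonneg hVnonneg] at hnorm_le
  have hfin : ∫ t in r..1, c * (1 - t * c) ^ (-α) ≤ (1 - r) ^ (1 - α) / (1 - α) := by
    rw [hval2]
    have hnum : (1 - r * c) ^ (1 - α) - (1 - c) ^ (1 - α) ≤ (1 - r) ^ (1 - α) := by
      have h1 : (1 - r * c) = (1 - c) + c * (1 - r) := by ring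
      have h2 : (1 - r * c) ^ (1 - α) ≤ (1 - c) ^ (1 - α) + (c * (1 - r)) ^ (1 - α) := by
        rw [h1]
        exact rpow_subadd (by linarith) (by nlinarith) (by linarith) (by linarith)
      have h3 : (c * (1 - r)) ^ (1 - α) ≤ (1 - r) ^ (1 - α) := by
        apply Real.rpow_le_rpow (by nlinarith) (by nlinarith) (by linarith)
      linarith
    gcongr
  linarith [hnorm_le, hfin]
lemma chord_mem_convex {S : Set ℂ} (hS : Convex ℝ S) {w s : ℂ} (hw : w ∈ S) (hs : s ∈ S)
    {t : ℝ} (ht : t ∈ Set.uIcc (0:ℝ) 1) : w + (t:ℂ) * (s - w) ∈ S := by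
  rw [Set.uIcc_of_le (zero_le_one)] at ht
  have h := hS hw hs (by linarith [ht.2] : (0:ℝ) ≤ 1 - t) ht.1 (by ring)
  have he : (1 - t) • w + t • s = w + (t:ℂ) * (s - w) := by
    simp only [Complex.real_smul]
    push_cast
    ring
  rwa [he] at h

section BallBounds

variable {α : ℝ} {f : ℂ → ℂ}

lemma ball_f0 (hm : memZ α f) (hn : zNorm α f ≤ 1) : ‖f 0‖ ≤ 1 := by
  have h1 := sSup_zygS_nonneg α f
  have h2 := norm_nonneg (deriv f 0)
  unfold zNorm at hn
  linarith

lemma ball_d0 (hm : memZ α f) (hn : zNorm α f ≤ 1) : ‖deriv f 0‖ ≤ 1 := by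
  have h1 := sSup_zygS_nonneg α f
  have h2 := norm_nonneg (f 0)
  unfold zNorm at hn
  linarith

lemma ball_dd (hα0 : 0 < α) (hm : memZ α f) (hn : zNorm α f ≤ 1) :
    ∀ z ∈ uD, ‖deriv (deriv f) z‖ ≤ (1 - ‖z‖) ^ (-α) := by
  intro z hz
  have hz1 : ‖z‖ < 1 := mem_uD_iff.1 hz
  have hz0 : 0 ≤ ‖z‖ := norm_nonneg z
  have hb : (0:ℝ) < 1 - ‖z‖ ^ 2 := by nlinarith
  have hb' : (0:ℝ) < 1 - ‖z‖ := by linarith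
  have hzy : zygS α f z ≤ 1 := le_trans (zygS_le_zNorm hm hz) hn
  unfold zygS at hzy
  have hp : (0:ℝ) < (1 - ‖z‖ ^ 2) ^ α := Real.rpow_pos_of_pos hb α
  have h1 : ‖deriv (deriv f) z‖ ≤ (1 - ‖z‖ ^ 2) ^ (-α) := by
    rw [Real.rpow_neg hb.le, ← one_div, le_div_iff₀ hp]
    linarith [hzy, (mul_comm ((1 - ‖z‖ ^ 2) ^ α) ‖deriv (deriv f) z‖ : (1 - ‖z‖ ^ 2) ^ α * ‖deriv (deriv f) z‖ = ‖deriv (deriv f) z‖ * (1 - ‖z‖ ^ 2) ^ α)]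
  calc ‖deriv (deriv f) z‖ ≤ (1 - ‖z‖ ^ 2) ^ (-α) := h1
    _ ≤ (1 - ‖z‖) ^ (-α) := by
        apply Real.rpow_le_rpow_of_nonpos hb' (by nlinarith) (by linarith)

lemma ball_d (hα0 : 0 < α) (hα1 : α < 1) (hm : memZ α f) (hn : zNorm α f ≤ 1) :
    ∀ w ∈ uD, ‖deriv f w‖ ≤ 1 + 1 / (1 - α) := by
  intro w hw
  have h := radial_est hα0 hα1 (memZ_analyticOnNhd hm).deriv hw (ball_dd hα0 hm hn)
    (le_refl (0:ℝ)) zero_le_one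
  simp only [Complex.ofReal_zero, zero_mul, sub_zero, Real.one_rpow] at h
  have h0 := ball_d0 hm hn
  have := norm_sub_norm_le (deriv f w) (deriv f 0)
  linarith

lemma ball_lip_f (hα0 : 0 < α) (hα1 : α < 1) (hm : memZ α f) (hn : zNorm α f ≤ 1)
    {w s : ℂ} (hw : w ∈ uD) (hs : s ∈ uD) :
    ‖f s - f w‖ ≤ (1 + 1 / (1 - α)) * ‖s - w‖ := by
  apply lip_est (memZ_analyticOnNhd hm) hw hs
  intro t ht
  exact ball_d hα0 hα1 hm hn _ (chord_mem hw hs ht)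

lemma ball_f (hα0 : 0 < α) (hα1 : α < 1) (hm : memZ α f) (hn : zNorm α f ≤ 1) :
    ∀ w ∈ uD, ‖f w‖ ≤ 2 + 1 / (1 - α) := by
  intro w hw
  have h := ball_lip_f hα0 hα1 hm hn zero_mem_uD hw
  simp only [sub_zero] at h
  have h0 := ball_f0 hm hn
  have hw1 : ‖w‖ < 1 := mem_uD_iff.1 hw
  have hM : (0:ℝ) ≤ 1 + 1 / (1 - α) := by
    have : (0:ℝ) < 1 - α := by linarith
    positivity
  have := norm_sub_norm_le (f w) (f 0)
  nlinarith

lemma ball_radial_f (hα0 : 0 < α) (hα1 : α < 1) (hm : memZ α f) (hn : zNorm α f ≤ 1)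
    {w : ℂ} (hw : w ∈ uD) {r : ℝ} (hr0 : 0 ≤ r) (hr1 : r ≤ 1) :
    ‖f w - f ((r:ℂ) * w)‖ ≤ (1 + 1 / (1 - α)) * (1 - r) := by
  have hrw : (r:ℂ) * w ∈ uD := smul_mem_uD hr0 hr1 hw
  have h := ball_lip_f hα0 hα1 hm hn hrw hw
  have he : ‖w - (r:ℂ) * w‖ = (1 - r) * ‖w‖ := by
    have : w - (r:ℂ) * w = ((1 - r : ℝ):ℂ) * w := by push_cast; ring
    rw [this, norm_mul, Complex.norm_real, Real.norm_eq_abs, _root_.abs_of_nonneg (by linarith)]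
  rw [he] at h
  have hw1 : ‖w‖ < 1 := mem_uD_iff.1 hw
  have hM : (0:ℝ) ≤ 1 + 1 / (1 - α) := by
    have : (0:ℝ) < 1 - α := by linarith
    positivity
  have h2 : (1 - r) * ‖w‖ ≤ (1 - r) := by nlinarith [norm_nonneg w]
  calc ‖f w - f ((r:ℂ) * w)‖ ≤ (1 + 1 / (1 - α)) * ((1 - r) * ‖w‖) := h
    _ ≤ (1 + 1 / (1 - α)) * (1 - r) := mul_le_mul_of_nonneg_left h2 hM

lemma ball_radial_d (hα0 : 0 < α) (hα1 : α < 1) (hm : memZ α f) (hn : zNorm α f ≤ 1)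
    {w : ℂ} (hw : w ∈ uD) {r : ℝ} (hr0 : 0 ≤ r) (hr1 : r ≤ 1) :
    ‖deriv f w - deriv f ((r:ℂ) * w)‖ ≤ (1 - r) ^ (1 - α) / (1 - α) :=
  radial_est hα0 hα1 (memZ_analyticOnNhd hm).deriv hw (ball_dd hα0 hm hn) hr0 hr1

lemma ball_lip_d (hα0 : 0 < α) (hm : memZ α f) (hn : zNorm α f ≤ 1)
    {ρ : ℝ} (hρ1 : ρ < 1) {w s : ℂ} (hw : w ∈ Metric.closedBall (0:ℂ) ρ)
    (hs : s ∈ Metric.closedBall (0:ℂ) ρ) :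
    ‖deriv f s - deriv f w‖ ≤ (1 - ρ) ^ (-α) * ‖s - w‖ := by
  have hsub : Metric.closedBall (0:ℂ) ρ ⊆ uD := by
    intro y hy
    rw [Metric.mem_closedBall, dist_zero_right] at hy
    exact mem_uD_iff.2 (lt_of_le_of_lt hy hρ1)
  apply lip_est (memZ_analyticOnNhd hm).deriv (hsub hw) (hsub hs)
  intro t ht
  have hy : w + (t:ℂ) * (s - w) ∈ Metric.closedBall (0:ℂ) ρ :=
    chord_mem_convex (convex_closedBall 0 ρ) hw hs ht
  have hyD : w + (t:ℂ) * (s - w) ∈ uD := hsub hy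
  have hyn : ‖w + (t:ℂ) * (s - w)‖ ≤ ρ := by
    rw [Metric.mem_closedBall, dist_zero_right] at hy
    exact hy
  calc ‖deriv (deriv f) (w + (t:ℂ) * (s - w))‖
      ≤ (1 - ‖w + (t:ℂ) * (s - w)‖) ^ (-α) := ball_dd hα0 hm hn _ hyD
    _ ≤ (1 - ρ) ^ (-α) := by
        apply Real.rpow_le_rpow_of_nonpos (by linarith) (by linarith) (by linarith)

end BallBounds
section ParamDeriv

variable {f g : ℂ → ℂ}

/-- The integral operator `G f (w) = ∫₀¹ w f(tw) g'(tw) dt` differentiates to `f w * g' w`. -/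
lemma hasDerivAt_G (hfN : AnalyticOnNhd ℂ f uD) (hgN : AnalyticOnNhd ℂ g uD)
    {w₀ : ℂ} (hw : w₀ ∈ uD) :
    HasDerivAt (fun w : ℂ => ∫ t in (0:ℝ)..1, w * (f ((t:ℂ) * w) * deriv g ((t:ℂ) * w)))
      (f w₀ * deriv g w₀) w₀ := by
  set F : ℂ → ℂ := fun y => f y * deriv g y with hFdef
  have hFN : AnalyticOnNhd ℂ F uD := hfN.mul hgN.deriv
  have hFc : ContinuousOn F uD := hFN.continuousOn
  have hF'c : ContinuousOn (deriv F) uD := hFN.deriv.continuousOn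
  have hw1 : ‖w₀‖ < 1 := mem_uD_iff.1 hw
  set ρ : ℝ := (1 + ‖w₀‖) / 2 with hρdef
  have hρ1 : ρ < 1 := by rw [hρdef]; linarith
  have hρ0 : 0 ≤ ρ := by rw [hρdef]; positivity
  have hw₀ρ : ‖w₀‖ < ρ := by rw [hρdef]; linarith
  set ε : ℝ := ρ - ‖w₀‖ with hεdef
  have hε : 0 < ε := by rw [hεdef]; linarith
  have hball : ∀ x ∈ Metric.ball w₀ ε, ‖x‖ ≤ ρ := by
    intro x hx
    rw [Metric.mem_ball, dist_eq_norm] at hx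
    calc ‖x‖ = ‖x - w₀ + w₀‖ := by ring_nf
      _ ≤ ‖x - w₀‖ + ‖w₀‖ := norm_add_le _ _
      _ ≤ ε + ‖w₀‖ := by linarith
      _ = ρ := by rw [hεdef]; ring
  have hKsub : Metric.closedBall (0:ℂ) ρ ⊆ uD := by
    intro y hy
    rw [Metric.mem_closedBall, dist_zero_right] at hy
    exact mem_uD_iff.2 (lt_of_le_of_lt hy hρ1)
  have htx : ∀ t : ℝ, t ∈ Set.Icc (0:ℝ) 1 → ∀ x : ℂ, ‖x‖ ≤ ρ →
      (t:ℂ) * x ∈ Metric.closedBall (0:ℂ) ρ := by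
    intro t ht x hx
    rw [Metric.mem_closedBall, dist_zero_right, norm_mul, Complex.norm_real,
      Real.norm_eq_abs, _root_.abs_of_nonneg ht.1]
    nlinarith [ht.2, norm_nonneg x]
  obtain ⟨C₁, hC₁⟩ := (isCompact_closedBall (0:ℂ) ρ).exists_bound_of_continuousOn
    (hFc.mono hKsub)
  obtain ⟨C₂, hC₂⟩ := (isCompact_closedBall (0:ℂ) ρ).exists_bound_of_continuousOn
    (hF'c.mono hKsub)
  -- continuity of integrands
  have hmemt : ∀ x : ℂ, ‖x‖ < 1 → ∀ t ∈ Set.uIcc (0:ℝ) 1, (t:ℂ) * x ∈ uD := by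
    intro x hx t ht
    rw [Set.uIcc_of_le zero_le_one] at ht
    exact smul_mem_uD ht.1 ht.2 (mem_uD_iff.2 hx)
  have hcomp : ∀ x : ℂ, ‖x‖ < 1 → ∀ (H : ℂ → ℂ), ContinuousOn H uD →
      ContinuousOn (fun t : ℝ => H ((t:ℂ) * x)) (Set.uIcc (0:ℝ) 1) := by
    intro x hx H hH
    apply hH.comp (by fun_prop) (hmemt x hx)
  have hcont : ∀ x : ℂ, ‖x‖ < 1 →
      ContinuousOn (fun t : ℝ => x * F ((t:ℂ) * x)) (Set.uIcc (0:ℝ) 1) := by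
    intro x hx
    exact continuousOn_const.mul (hcomp x hx F hFc)
  have hcont' : ∀ x : ℂ, ‖x‖ < 1 →
      ContinuousOn (fun t : ℝ => F ((t:ℂ) * x) + x * ((t:ℂ) * deriv F ((t:ℂ) * x)))
        (Set.uIcc (0:ℝ) 1) := by
    intro x hx
    apply (hcomp x hx F hFc).add
    apply continuousOn_const.mul
    exact (Complex.continuous_ofReal.continuousOn).mul (hcomp x hx (deriv F) hF'c)
  have key := intervalIntegral.hasDerivAt_integral_of_dominated_loc_of_deriv_le
    (F := fun (x : ℂ) (t : ℝ) => x * F ((t:ℂ) * x))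
    (F' := fun (x : ℂ) (t : ℝ) => F ((t:ℂ) * x) + x * ((t:ℂ) * deriv F ((t:ℂ) * x)))
    (bound := fun _ => C₁ + C₂) (a := 0) (b := 1) (μ := MeasureTheory.volume) (x₀ := w₀) (Metric.ball_mem_nhds w₀ hε)
    ?meas ?int ?meas' ?bnd ?bndint ?diff
  case meas =>
    filter_upwards [Metric.ball_mem_nhds w₀ hε] with x hx
    have hx1 : ‖x‖ < 1 := lt_of_le_of_lt (hball x hx) hρ1
    exact ((hcont x hx1).mono (Set.uIoc_subset_uIcc)).aestronglyMeasurable measurableSet_uIoc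
  case int => exact (hcont w₀ hw1).intervalIntegrable
  case meas' =>
    exact ((hcont' w₀ hw1).mono (Set.uIoc_subset_uIcc)).aestronglyMeasurable measurableSet_uIoc
  case bnd =>
    apply Filter.Eventually.of_forall
    intro t ht x hx
    rw [Set.uIoc_of_le zero_le_one] at ht
    have htIcc : t ∈ Set.Icc (0:ℝ) 1 := Set.Ioc_subset_Icc_self ht
    have hxρ : ‖x‖ ≤ ρ := hball x hx
    have htxm := htx t htIcc x hxρ
    have h1 : ‖F ((t:ℂ) * x)‖ ≤ C₁ := hC₁ _ htxm
    have h2 : ‖deriv F ((t:ℂ) * x)‖ ≤ C₂ := hC₂ _ htxm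
    calc ‖F ((t:ℂ) * x) + x * ((t:ℂ) * deriv F ((t:ℂ) * x))‖
        ≤ ‖F ((t:ℂ) * x)‖ + ‖x * ((t:ℂ) * deriv F ((t:ℂ) * x))‖ := norm_add_le _ _
      _ ≤ C₁ + C₂ := by
          have he : ‖x * ((t:ℂ) * deriv F ((t:ℂ) * x))‖
              = ‖x‖ * (|t| * ‖deriv F ((t:ℂ) * x)‖) := by
            rw [norm_mul, norm_mul, Complex.norm_real, Real.norm_eq_abs]
          have hx1 : ‖x‖ ≤ 1 := le_trans hxρ hρ1.le
          have ht1 : |t| ≤ 1 := by rw [_root_.abs_of_nonneg htIcc.1]; exact htIcc.2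
          have hd0 := norm_nonneg (deriv F ((t:ℂ) * x))
          have hx0 := norm_nonneg x
          have ha0 := abs_nonneg t
          rw [he]
          have hb1 : |t| * ‖deriv F ((t:ℂ) * x)‖ ≤ C₂ := by nlinarith
          have hb2 : ‖x‖ * (|t| * ‖deriv F ((t:ℂ) * x)‖) ≤ C₂ := by
            nlinarith [mul_nonneg ha0 hd0]
          linarith
  case bndint => exact intervalIntegrable_const
  case diff =>
    apply Filter.Eventually.of_forall
    intro t ht x hx
    rw [Set.uIoc_of_le zero_le_one] at ht
    have htIcc : t ∈ Set.Icc (0:ℝ) 1 := Set.Ioc_subset_Icc_self ht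
    have hxρ : ‖x‖ ≤ ρ := hball x hx
    have htxm : (t:ℂ) * x ∈ uD := hKsub (htx t htIcc x hxρ)
    have hinner : HasDerivAt (fun y : ℂ => (t:ℂ) * y) (t:ℂ) x := by
      simpa using (hasDerivAt_id x).const_mul (t:ℂ)
    have houter : HasDerivAt F (deriv F ((t:ℂ) * x)) ((t:ℂ) * x) :=
      ((hFN _ htxm).differentiableAt).hasDerivAt
    have hcompd : HasDerivAt (fun y : ℂ => F ((t:ℂ) * y)) (deriv F ((t:ℂ) * x) * (t:ℂ)) x :=
      houter.comp x hinner
    have hprod := (hasDerivAt_id x).mul hcompd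
    exact hprod.congr_deriv (by simp only [id_eq]; ring)
  -- now compute the value of the derivative integral
  have hψ : ∀ t ∈ Set.uIcc (0:ℝ) 1, HasDerivAt (fun s : ℝ => (s:ℂ) * F ((s:ℂ) * w₀))
      (F ((t:ℂ) * w₀) + w₀ * ((t:ℂ) * deriv F ((t:ℂ) * w₀))) t := by
    intro t ht
    have htm : (t:ℂ) * w₀ ∈ uD := hmemt w₀ hw1 t ht
    have hinner : HasDerivAt (fun s : ℂ => s * w₀) w₀ (t:ℂ) := by
      simpa using (hasDerivAt_id ((t:ℂ))).mul_const w₀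
    have houter : HasDerivAt F (deriv F ((t:ℂ) * w₀)) ((t:ℂ) * w₀) :=
      ((hFN _ htm).differentiableAt).hasDerivAt
    have hcompd : HasDerivAt (fun s : ℂ => F (s * w₀)) (deriv F ((t:ℂ) * w₀) * w₀) (t:ℂ) :=
      by have := houter.comp ((t:ℂ)) hinner; exact this
    have hprodC := (hasDerivAt_id ((t:ℂ))).mul hcompd
    have hreal := hprodC.comp_ofReal
    convert hreal using 1
    · funext y; simp [mul_comm]
    · simp only [id_eq]
      ring
  have hval : ∫ t in (0:ℝ)..1, (F ((t:ℂ) * w₀) + w₀ * ((t:ℂ) * deriv F ((t:ℂ) * w₀)))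
      = F w₀ := by
    rw [intervalIntegral.integral_eq_sub_of_hasDerivAt hψ (hcont' w₀ hw1).intervalIntegrable]
    norm_num
  rw [hval] at key
  exact key.2
end ParamDeriv
section TStruct

variable {g φ f h : ℂ → ℂ}

lemma cont_integrand (hfN : AnalyticOnNhd ℂ f uD) (hgN : AnalyticOnNhd ℂ g uD)
    {w : ℂ} (hw : w ∈ uD) :
    ContinuousOn (fun t : ℝ => w * (f ((t:ℂ) * w) * deriv g ((t:ℂ) * w))) (Set.uIcc (0:ℝ) 1) := by
  have hmemt : ∀ t ∈ Set.uIcc (0:ℝ) 1, (t:ℂ) * w ∈ uD := by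
    intro t ht
    rw [Set.uIcc_of_le zero_le_one] at ht
    exact smul_mem_uD ht.1 ht.2 hw
  have hFc : ContinuousOn (fun y => f y * deriv g y) uD :=
    (hfN.mul hgN.deriv).continuousOn
  exact continuousOn_const.mul (hFc.comp (by fun_prop) hmemt)

lemma T_add (hfN : AnalyticOnNhd ℂ f uD) (hhN : AnalyticOnNhd ℂ h uD)
    (hgN : AnalyticOnNhd ℂ g uD) {z : ℂ} (hz : φ z ∈ uD) :
    CphiUg g φ (f + h) z = CphiUg g φ f z + CphiUg g φ h z := by
  unfold CphiUg
  rw [← intervalIntegral.integral_add (cont_integrand hfN hgN hz).intervalIntegrable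
    (cont_integrand hhN hgN hz).intervalIntegrable]
  apply intervalIntegral.integral_congr
  intro t _
  simp only [Pi.add_apply]
  ring

lemma T_smul (c : ℂ) (z : ℂ) :
    CphiUg g φ (c • f) z = c * CphiUg g φ f z := by
  unfold CphiUg
  rw [← intervalIntegral.integral_const_mul]
  apply intervalIntegral.integral_congr
  intro t _
  simp only [Pi.smul_apply, smul_eq_mul]
  ring

lemma hasDerivAt_T (hφN : AnalyticOnNhd ℂ φ uD) (hφm : Set.MapsTo φ uD uD)
    (hgN : AnalyticOnNhd ℂ g uD) (hfN : AnalyticOnNhd ℂ f uD) {z : ℂ} (hz : z ∈ uD) :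
    HasDerivAt (CphiUg g φ f) ((f (φ z) * deriv g (φ z)) * deriv φ z) z := by
  have hG := hasDerivAt_G hfN hgN (hφm hz)
  have hφd : HasDerivAt φ (deriv φ z) z := ((hφN z hz).differentiableAt).hasDerivAt
  exact hG.comp z hφd

lemma deriv_T_eq (hφN : AnalyticOnNhd ℂ φ uD) (hφm : Set.MapsTo φ uD uD)
    (hgN : AnalyticOnNhd ℂ g uD) (hfN : AnalyticOnNhd ℂ f uD) {z : ℂ} (hz : z ∈ uD) :
    deriv (CphiUg g φ f) z = (f (φ z) * deriv g (φ z)) * deriv φ z :=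
  (hasDerivAt_T hφN hφm hgN hfN hz).deriv

lemma deriv_prod_formula {F : ℂ → ℂ} (hFN : AnalyticOnNhd ℂ F uD)
    (hφN : AnalyticOnNhd ℂ φ uD) (hφm : Set.MapsTo φ uD uD) {z : ℂ} (hz : z ∈ uD) :
    HasDerivAt (fun y => F (φ y) * deriv φ y)
      (deriv F (φ z) * deriv φ z * deriv φ z + F (φ z) * deriv (deriv φ) z) z := by
  have hφd : HasDerivAt φ (deriv φ z) z := ((hφN z hz).differentiableAt).hasDerivAt
  have hFd : HasDerivAt F (deriv F (φ z)) (φ z) := ((hFN _ (hφm hz)).differentiableAt).hasDerivAt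
  have hFφ : HasDerivAt (fun y => F (φ y)) (deriv F (φ z) * deriv φ z) z := hFd.comp z hφd
  have hφ' : HasDerivAt (deriv φ) (deriv (deriv φ) z) z :=
    ((hφN.deriv z hz).differentiableAt).hasDerivAt
  exact hFφ.mul hφ'

lemma deriv2_T (hφN : AnalyticOnNhd ℂ φ uD) (hφm : Set.MapsTo φ uD uD)
    (hgN : AnalyticOnNhd ℂ g uD) (hfN : AnalyticOnNhd ℂ f uD) {z : ℂ} (hz : z ∈ uD) :
    deriv (deriv (CphiUg g φ f)) z
      = deriv (fun y => f y * deriv g y) (φ z) * deriv φ z * deriv φ z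
        + (f (φ z) * deriv g (φ z)) * deriv (deriv φ) z := by
  have heq : ∀ y ∈ uD, deriv (CphiUg g φ f) y
      = (fun y => ((fun x => f x * deriv g x) (φ y)) * deriv φ y) y := by
    intro y hy
    exact deriv_T_eq hφN hφm hgN hfN hy
  have h2 := (eventuallyEq_of_eqOn_uD hz heq).deriv_eq
  rw [h2]
  exact (deriv_prod_formula (hfN.mul hgN.deriv) hφN hφm hz).deriv

lemma deriv_mul_eq (hfN : AnalyticOnNhd ℂ f uD) (hgN : AnalyticOnNhd ℂ g uD)
    {w : ℂ} (hw : w ∈ uD) :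
    deriv (fun y => f y * deriv g y) w
      = deriv f w * deriv g w + f w * deriv (deriv g) w := by
  have h1 : HasDerivAt f (deriv f w) w := ((hfN w hw).differentiableAt).hasDerivAt
  have h2 : HasDerivAt (deriv g) (deriv (deriv g) w) w :=
    ((hgN.deriv w hw).differentiableAt).hasDerivAt
  exact (h1.mul h2).deriv

end TStruct
section Extraction

lemma extraction {α : ℝ} (hα0 : 0 < α) (hα1 : α < 1) (u : ℕ → ℂ → ℂ)
    (hu : ∀ n, memZ α (u n) ∧ zNorm α (u n) ≤ 1) :
    ∃ σ : ℕ → ℕ, StrictMono σ ∧ ∀ ε > 0, ∃ N, ∀ m ≥ N, ∀ n ≥ N, ∀ w ∈ uD,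
      ‖u (σ m) w - u (σ n) w‖ ≤ ε ∧ ‖deriv (u (σ m)) w - deriv (u (σ n)) w‖ ≤ ε := by
  have h1α : (0:ℝ) < 1 - α := by linarith
  set Md : ℝ := 1 + 1 / (1 - α) with hMddef
  have hMd0 : 0 ≤ Md := by rw [hMddef]; positivity
  set Mv : ℝ := 2 + 1 / (1 - α) with hMvdef
  have hMM : 0 ≤ max Mv Md := le_trans hMd0 (le_max_right _ _)
  -- countable dense set
  obtain ⟨S, hSc, hSd⟩ := TopologicalSpace.exists_countable_dense ℂ
  set Sd : Set ℂ := S ∩ uD with hSddef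
  have hSdc : Sd.Countable := hSc.mono Set.inter_subset_left
  haveI : Countable ↥Sd := hSdc.to_subtype
  -- the sequence of sampled pairs
  set y : ℕ → (↥Sd → ℂ × ℂ) := fun n s => (u n ↑s, deriv (u n) ↑s) with hydef
  have hK : IsCompact (Set.univ.pi fun _ : ↥Sd => Metric.closedBall (0:ℂ × ℂ) (max Mv Md)) :=
    isCompact_univ_pi fun _ => isCompact_closedBall _ _
  have hyK : ∀ n, y n ∈ Set.univ.pi fun _ : ↥Sd => Metric.closedBall (0:ℂ × ℂ) (max Mv Md) := by
    intro n
    rw [Set.mem_univ_pi]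
    intro s
    have hsD : (s:ℂ) ∈ uD := s.2.2
    rw [Metric.mem_closedBall, dist_zero_right]
    have h1 : ‖u n ↑s‖ ≤ Mv := ball_f hα0 hα1 (hu n).1 (hu n).2 _ hsD
    have h2 : ‖deriv (u n) ↑s‖ ≤ Md := ball_d hα0 hα1 (hu n).1 (hu n).2 _ hsD
    rw [hydef]
    calc ‖(u n ↑s, deriv (u n) ↑s)‖ = max ‖u n ↑s‖ ‖deriv (u n) ↑s‖ := rfl
      _ ≤ max Mv Md := max_le_max h1 h2
  obtain ⟨ylim, _, σ, hσmono, hσtend⟩ := hK.tendsto_subseq hyK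
  refine ⟨σ, hσmono, ?_⟩
  have hcoord : ∀ s : ↥Sd, Filter.Tendsto (fun n => y (σ n) s) Filter.atTop (nhds (ylim s)) :=
    fun s => (tendsto_pi_nhds.1 hσtend) s
  -- the ε-argument
  intro ε hε
  -- choose the radial radius r
  obtain ⟨d1, hd1pos, hd1half, hd1Md, hd1pow⟩ :
      ∃ d1 : ℝ, 0 < d1 ∧ d1 ≤ 1/2 ∧ Md * d1 ≤ ε/6 ∧ d1 ^ (1 - α) / (1 - α) ≤ ε/6 := by
    set A : ℝ := ε / (6 * (Md + 1)) with hAdef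
    set B : ℝ := ((1 - α) * ε / 6) ^ ((1:ℝ) / (1 - α)) with hBdef
    have hApos : 0 < A := by rw [hAdef]; positivity
    have hbase : (0:ℝ) < (1 - α) * ε / 6 := by positivity
    have hBpos : 0 < B := Real.rpow_pos_of_pos hbase _
    refine ⟨min (min A B) (1/2), lt_min (lt_min hApos hBpos) (by norm_num),
      min_le_right _ _, ?_, ?_⟩
    · have h1 : min (min A B) (1/2) ≤ A := le_trans (min_le_left _ _) (min_le_left _ _)
      calc Md * min (min A B) (1/2) ≤ Md * A := mul_le_mul_of_nonneg_left h1 hMd0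
        _ ≤ (Md + 1) * A := mul_le_mul_of_nonneg_right (by linarith) hApos.le
        _ = ε/6 := by rw [hAdef]; field_simp
    · have h1 : min (min A B) (1/2) ≤ B := le_trans (min_le_left _ _) (min_le_right _ _)
      have h2 : (min (min A B) (1/2)) ^ (1 - α) ≤ B ^ (1 - α) := by
        apply Real.rpow_le_rpow _ h1 h1α.le
        exact le_of_lt (lt_min (lt_min hApos hBpos) (by norm_num))
      have h3 : B ^ (1 - α) = (1 - α) * ε / 6 := by
        rw [hBdef, ← Real.rpow_mul hbase.le, one_div, inv_mul_cancel₀ (ne_of_gt h1α),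
          Real.rpow_one]
      rw [h3] at h2
      calc (min (min A B) (1/2)) ^ (1 - α) / (1 - α) ≤ ((1 - α) * ε / 6) / (1 - α) :=
            (div_le_div_iff_of_pos_right h1α).mpr h2
        _ = ε/6 := by field_simp
  set r : ℝ := 1 - d1 with hrdef
  have hr0 : 0 ≤ r := by rw [hrdef]; linarith
  have hr1 : r < 1 := by rw [hrdef]; linarith
  have h1r : 1 - r = d1 := by rw [hrdef]; ring
  -- radial tail bounds
  have htail_v : ∀ n, ∀ w ∈ uD, ‖u n w - u n ((r:ℂ) * w)‖ ≤ ε / 6 := by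
    intro n w hw
    have h := ball_radial_f hα0 hα1 (hu n).1 (hu n).2 hw hr0 hr1.le
    rw [h1r] at h
    calc ‖u n w - u n ((r:ℂ) * w)‖ ≤ (1 + 1/(1-α)) * d1 := h
      _ = Md * d1 := by rw [hMddef]
      _ ≤ ε/6 := hd1Md
  have htail_d : ∀ n, ∀ w ∈ uD, ‖deriv (u n) w - deriv (u n) ((r:ℂ) * w)‖ ≤ ε / 6 := by
    intro n w hw
    have h := ball_radial_d hα0 hα1 (hu n).1 (hu n).2 hw hr0 hr1.le
    rw [h1r] at h
    exact le_trans h hd1pow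
  -- Lipschitz region and net radius
  set ρ : ℝ := (1 + r) / 2 with hρdef
  have hrρ : r < ρ := by rw [hρdef]; linarith
  have hρ1 : ρ < 1 := by rw [hρdef]; linarith
  have hρ0 : 0 ≤ ρ := by rw [hρdef]; linarith
  set Ld : ℝ := (1 - ρ) ^ (-α) with hLddef
  have hLd0 : 0 ≤ Ld := Real.rpow_nonneg (by linarith) _
  obtain ⟨δ, hδpos, hδ3, hδMd, hδLd⟩ :
      ∃ δ : ℝ, 0 < δ ∧ δ ≤ (1 - r)/2 ∧ Md * δ ≤ ε/6 ∧ Ld * δ ≤ ε/6 := by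
    set A : ℝ := ε / (6 * (Md + 1)) with hAdef
    set B : ℝ := ε / (6 * (Ld + 1)) with hBdef
    have hApos : 0 < A := by rw [hAdef]; positivity
    have hBpos : 0 < B := by rw [hBdef]; positivity
    refine ⟨min (min A B) ((1 - r)/2), lt_min (lt_min hApos hBpos) (by linarith),
      min_le_right _ _, ?_, ?_⟩
    · have h1 : min (min A B) ((1 - r)/2) ≤ A := le_trans (min_le_left _ _) (min_le_left _ _)
      calc Md * min (min A B) ((1 - r)/2) ≤ Md * A := mul_le_mul_of_nonneg_left h1 hMd0
        _ ≤ (Md + 1) * A := mul_le_mul_of_nonneg_right (by linarith) hApos.le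
        _ = ε/6 := by rw [hAdef]; field_simp
    · have h1 : min (min A B) ((1 - r)/2) ≤ B := le_trans (min_le_left _ _) (min_le_right _ _)
      calc Ld * min (min A B) ((1 - r)/2) ≤ Ld * B := mul_le_mul_of_nonneg_left h1 hLd0
        _ ≤ (Ld + 1) * B := mul_le_mul_of_nonneg_right (by linarith) hBpos.le
        _ = ε/6 := by rw [hBdef]; field_simp
  -- cover the closed ball of radius r by δ-balls centered at points of Sd
  have hcov : Metric.closedBall (0:ℂ) r ⊆ ⋃ s : ↥Sd, Metric.ball (s:ℂ) δ := by
    intro w hw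
    rw [Metric.mem_closedBall, dist_zero_right] at hw
    obtain ⟨p, hpb, hpS⟩ := Metric.dense_iff.1 hSd w δ hδpos
    have hpw : dist p w < δ := by rwa [Metric.mem_ball] at hpb
    have hpD : p ∈ uD := by
      rw [mem_uD_iff]
      have : ‖p‖ ≤ ‖p - w‖ + ‖w‖ := by
        calc ‖p‖ = ‖p - w + w‖ := by ring_nf
          _ ≤ ‖p - w‖ + ‖w‖ := norm_add_le _ _
      rw [dist_eq_norm] at hpw
      have : ‖p‖ < δ + r := by linarith
      linarith [hδ3]
    refine Set.mem_iUnion.2 ⟨⟨p, hpS, hpD⟩, ?_⟩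
    rw [Metric.mem_ball, dist_comm]
    exact hpw
  obtain ⟨Fs, hFs⟩ := (isCompact_closedBall (0:ℂ) r).elim_finite_subcover
    (fun s : ↥Sd => Metric.ball (s:ℂ) δ) (fun _ => Metric.isOpen_ball) hcov
  -- choose N using convergence at the finitely many net points
  have hNex : ∀ s : ↥Sd, ∃ N, ∀ n ≥ N, dist (y (σ n) s) (ylim s) < ε / 12 := by
    intro s
    exact Metric.tendsto_atTop.1 (hcoord s) (ε/12) (by positivity)
  choose Ns hNs using hNex
  refine ⟨Fs.sup Ns, ?_⟩
  intro m hm n hn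
  -- coordinate Cauchy estimates at net points
  have hnet : ∀ s ∈ Fs, ‖u (σ m) ↑s - u (σ n) ↑s‖ ≤ ε/6 ∧
      ‖deriv (u (σ m)) ↑s - deriv (u (σ n)) ↑s‖ ≤ ε/6 := by
    intro s hs
    have hm' : Ns s ≤ m := le_trans (Finset.le_sup hs) hm
    have hn' : Ns s ≤ n := le_trans (Finset.le_sup hs) hn
    have h1 := hNs s m hm'
    have h2 := hNs s n hn'
    have hpair : dist (y (σ m) s) (y (σ n) s) ≤ ε/6 := by
      calc dist (y (σ m) s) (y (σ n) s)
          ≤ dist (y (σ m) s) (ylim s) + dist (ylim s) (y (σ n) s) := dist_triangle _ _ _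
        _ ≤ ε/12 + ε/12 := by rw [dist_comm (ylim s)]; linarith
        _ = ε/6 := by ring
    constructor
    · calc ‖u (σ m) ↑s - u (σ n) ↑s‖ = dist (u (σ m) ↑s) (u (σ n) ↑s) := (dist_eq_norm _ _).symm
        _ ≤ dist (y (σ m) s) (y (σ n) s) := by rw [Prod.dist_eq]; exact le_max_left _ _
        _ ≤ ε/6 := hpair
    · calc ‖deriv (u (σ m)) ↑s - deriv (u (σ n)) ↑s‖
          = dist (deriv (u (σ m)) ↑s) (deriv (u (σ n)) ↑s) := (dist_eq_norm _ _).symm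
        _ ≤ dist (y (σ m) s) (y (σ n) s) := by rw [Prod.dist_eq]; exact le_max_right _ _
        _ ≤ ε/6 := hpair
  -- estimates on the closed ball of radius r
  have hball_est : ∀ w : ℂ, ‖w‖ ≤ r → ‖u (σ m) w - u (σ n) w‖ ≤ ε/2 ∧
      ‖deriv (u (σ m)) w - deriv (u (σ n)) w‖ ≤ ε/2 := by
    intro w hw
    have hwD : w ∈ uD := mem_uD_iff.2 (lt_of_le_of_lt hw hr1)
    have hwcov : w ∈ ⋃ s ∈ Fs, Metric.ball (s:ℂ) δ :=
      hFs (by rw [Metric.mem_closedBall, dist_zero_right]; exact hw)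
    obtain ⟨s, hsF, hws⟩ := Set.mem_iUnion₂.1 hwcov
    rw [Metric.mem_ball, dist_eq_norm] at hws
    have hsD : (s:ℂ) ∈ uD := s.2.2
    obtain ⟨hnet1, hnet2⟩ := hnet s hsF
    constructor
    · have lip1 : ‖u (σ m) ↑s - u (σ m) w‖ ≤ Md * ‖(s:ℂ) - w‖ := by
        rw [hMddef]; exact ball_lip_f hα0 hα1 (hu (σ m)).1 (hu (σ m)).2 hwD hsD
      have lip2 : ‖u (σ n) ↑s - u (σ n) w‖ ≤ Md * ‖(s:ℂ) - w‖ := by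
        rw [hMddef]; exact ball_lip_f hα0 hα1 (hu (σ n)).1 (hu (σ n)).2 hwD hsD
      have hsw : ‖(s:ℂ) - w‖ ≤ δ := by
        rw [← norm_neg]; simp only [neg_sub]; exact hws.le
      have l1 : ‖u (σ m) ↑s - u (σ m) w‖ ≤ ε/6 := by
        calc ‖u (σ m) ↑s - u (σ m) w‖ ≤ Md * ‖(s:ℂ) - w‖ := lip1
          _ ≤ Md * δ := mul_le_mul_of_nonneg_left hsw hMd0
          _ ≤ ε/6 := hδMd
      have l2 : ‖u (σ n) ↑s - u (σ n) w‖ ≤ ε/6 := by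
        calc ‖u (σ n) ↑s - u (σ n) w‖ ≤ Md * ‖(s:ℂ) - w‖ := lip2
          _ ≤ Md * δ := mul_le_mul_of_nonneg_left hsw hMd0
          _ ≤ ε/6 := hδMd
      calc ‖u (σ m) w - u (σ n) w‖
          = ‖(u (σ m) w - u (σ m) ↑s) + (u (σ m) ↑s - u (σ n) ↑s) + (u (σ n) ↑s - u (σ n) w)‖ := by
            congr 1; ring
        _ ≤ ‖(u (σ m) w - u (σ m) ↑s) + (u (σ m) ↑s - u (σ n) ↑s)‖ + ‖u (σ n) ↑s - u (σ n) w‖ :=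
            norm_add_le _ _
        _ ≤ ‖u (σ m) w - u (σ m) ↑s‖ + ‖u (σ m) ↑s - u (σ n) ↑s‖ + ‖u (σ n) ↑s - u (σ n) w‖ := by
            have := norm_add_le (u (σ m) w - u (σ m) ↑s) (u (σ m) ↑s - u (σ n) ↑s)
            linarith
        _ ≤ ε/6 + ε/6 + ε/6 := by
            have l1' : ‖u (σ m) w - u (σ m) ↑s‖ ≤ ε/6 := by rw [← norm_neg]; simp only [neg_sub]; exact l1
            exact add_le_add (add_le_add l1' hnet1) l2
        _ = ε/2 := by ring
    · -- derivative part, Lipschitz on closedBall 0 ρ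
      have hwρ : w ∈ Metric.closedBall (0:ℂ) ρ := by
        rw [Metric.mem_closedBall, dist_zero_right]; linarith
      have hsρ : (s:ℂ) ∈ Metric.closedBall (0:ℂ) ρ := by
        rw [Metric.mem_closedBall, dist_zero_right]
        have : ‖(s:ℂ)‖ ≤ ‖(s:ℂ) - w‖ + ‖w‖ := by
          calc ‖(s:ℂ)‖ = ‖(s:ℂ) - w + w‖ := by ring_nf
            _ ≤ ‖(s:ℂ) - w‖ + ‖w‖ := norm_add_le _ _
        have hsw : ‖(s:ℂ) - w‖ ≤ δ := by
          rw [← norm_neg]; simp only [neg_sub]; exact hws.le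
        have : ‖(s:ℂ)‖ ≤ δ + r := by linarith
        rw [hρdef]; linarith [hδ3]
      have hsw : ‖(s:ℂ) - w‖ ≤ δ := by
        rw [← norm_neg]; simp only [neg_sub]; exact hws.le
      have lip1 : ‖deriv (u (σ m)) ↑s - deriv (u (σ m)) w‖ ≤ Ld * ‖(s:ℂ) - w‖ := by
        rw [hLddef]; exact ball_lip_d hα0 (hu (σ m)).1 (hu (σ m)).2 hρ1 hwρ hsρ
      have lip2 : ‖deriv (u (σ n)) ↑s - deriv (u (σ n)) w‖ ≤ Ld * ‖(s:ℂ) - w‖ := by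
        rw [hLddef]; exact ball_lip_d hα0 (hu (σ n)).1 (hu (σ n)).2 hρ1 hwρ hsρ
      have l1 : ‖deriv (u (σ m)) ↑s - deriv (u (σ m)) w‖ ≤ ε/6 :=
        le_trans (le_trans lip1 (mul_le_mul_of_nonneg_left hsw hLd0)) hδLd
      have l2 : ‖deriv (u (σ n)) ↑s - deriv (u (σ n)) w‖ ≤ ε/6 :=
        le_trans (le_trans lip2 (mul_le_mul_of_nonneg_left hsw hLd0)) hδLd
      calc ‖deriv (u (σ m)) w - deriv (u (σ n)) w‖
          = ‖(deriv (u (σ m)) w - deriv (u (σ m)) ↑s) + (deriv (u (σ m)) ↑s - deriv (u (σ n)) ↑s)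
              + (deriv (u (σ n)) ↑s - deriv (u (σ n)) w)‖ := by congr 1; ring
        _ ≤ ‖(deriv (u (σ m)) w - deriv (u (σ m)) ↑s) + (deriv (u (σ m)) ↑s - deriv (u (σ n)) ↑s)‖
              + ‖deriv (u (σ n)) ↑s - deriv (u (σ n)) w‖ := norm_add_le _ _
        _ ≤ ‖deriv (u (σ m)) w - deriv (u (σ m)) ↑s‖ + ‖deriv (u (σ m)) ↑s - deriv (u (σ n)) ↑s‖
              + ‖deriv (u (σ n)) ↑s - deriv (u (σ n)) w‖ := by
            have := norm_add_le (deriv (u (σ m)) w - deriv (u (σ m)) ↑s)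
              (deriv (u (σ m)) ↑s - deriv (u (σ n)) ↑s)
            linarith
        _ ≤ ε/6 + ε/6 + ε/6 := by
            have l1' : ‖deriv (u (σ m)) w - deriv (u (σ m)) ↑s‖ ≤ ε/6 := by
              rw [← norm_neg]; simp only [neg_sub]; exact l1
            exact add_le_add (add_le_add l1' hnet2) l2
        _ = ε/2 := by ring
  -- conclude for all w in uD using the radial tails
  intro w hwD
  by_cases hwr : ‖w‖ ≤ r
  · obtain ⟨h1, h2⟩ := hball_est w hwr
    exact ⟨by linarith, by linarith⟩
  · have hrwD : (r:ℂ) * w ∈ uD := smul_mem_uD hr0 hr1.le hwD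
    have hrw_r : ‖(r:ℂ) * w‖ ≤ r := by
      rw [norm_mul, Complex.norm_real, Real.norm_eq_abs, _root_.abs_of_nonneg hr0]
      have := (mem_uD_iff.1 hwD).le
      nlinarith
    obtain ⟨h1, h2⟩ := hball_est ((r:ℂ) * w) hrw_r
    constructor
    · have t1 := htail_v (σ m) w hwD
      have t2 := htail_v (σ n) w hwD
      calc ‖u (σ m) w - u (σ n) w‖
          = ‖(u (σ m) w - u (σ m) ((r:ℂ)*w)) + (u (σ m) ((r:ℂ)*w) - u (σ n) ((r:ℂ)*w))
              + (u (σ n) ((r:ℂ)*w) - u (σ n) w)‖ := by congr 1; ring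
        _ ≤ ‖(u (σ m) w - u (σ m) ((r:ℂ)*w)) + (u (σ m) ((r:ℂ)*w) - u (σ n) ((r:ℂ)*w))‖
              + ‖u (σ n) ((r:ℂ)*w) - u (σ n) w‖ := norm_add_le _ _
        _ ≤ ‖u (σ m) w - u (σ m) ((r:ℂ)*w)‖ + ‖u (σ m) ((r:ℂ)*w) - u (σ n) ((r:ℂ)*w)‖
              + ‖u (σ n) ((r:ℂ)*w) - u (σ n) w‖ := by
            have := norm_add_le (u (σ m) w - u (σ m) ((r:ℂ)*w))
              (u (σ m) ((r:ℂ)*w) - u (σ n) ((r:ℂ)*w))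
            linarith
        _ ≤ ε/6 + ε/2 + ε/6 := by
            have t2' : ‖u (σ n) ((r:ℂ)*w) - u (σ n) w‖ ≤ ε/6 := by
              rw [← norm_neg]; simp only [neg_sub]; exact t2
            exact add_le_add (add_le_add t1 h1) t2'
        _ ≤ ε := by linarith
    · have t1 := htail_d (σ m) w hwD
      have t2 := htail_d (σ n) w hwD
      calc ‖deriv (u (σ m)) w - deriv (u (σ n)) w‖
          = ‖(deriv (u (σ m)) w - deriv (u (σ m)) ((r:ℂ)*w))
              + (deriv (u (σ m)) ((r:ℂ)*w) - deriv (u (σ n)) ((r:ℂ)*w))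
              + (deriv (u (σ n)) ((r:ℂ)*w) - deriv (u (σ n)) w)‖ := by congr 1; ring
        _ ≤ ‖(deriv (u (σ m)) w - deriv (u (σ m)) ((r:ℂ)*w))
              + (deriv (u (σ m)) ((r:ℂ)*w) - deriv (u (σ n)) ((r:ℂ)*w))‖
              + ‖deriv (u (σ n)) ((r:ℂ)*w) - deriv (u (σ n)) w‖ := norm_add_le _ _
        _ ≤ ‖deriv (u (σ m)) w - deriv (u (σ m)) ((r:ℂ)*w)‖
              + ‖deriv (u (σ m)) ((r:ℂ)*w) - deriv (u (σ n)) ((r:ℂ)*w)‖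
              + ‖deriv (u (σ n)) ((r:ℂ)*w) - deriv (u (σ n)) w‖ := by
            have := norm_add_le (deriv (u (σ m)) w - deriv (u (σ m)) ((r:ℂ)*w))
              (deriv (u (σ m)) ((r:ℂ)*w) - deriv (u (σ n)) ((r:ℂ)*w))
            linarith
        _ ≤ ε/6 + ε/2 + ε/6 := by
            have t2' : ‖deriv (u (σ n)) ((r:ℂ)*w) - deriv (u (σ n)) w‖ ≤ ε/6 := by
              rw [← norm_neg]; simp only [neg_sub]; exact t2
            exact add_le_add (add_le_add t1 h2) t2'
        _ ≤ ε := by linarith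

end Extraction
lemma zNorm_vanish {b : ℝ} {D : ℂ → ℂ} (hD : ∀ y ∈ uD, D y = 0) : zNorm b D = 0 := by
  have hev : D =ᶠ[nhds (0:ℂ)] (fun _ => (0:ℂ)) :=
    eventuallyEq_of_eqOn_uD zero_mem_uD hD
  have h0 : D 0 = 0 := hD 0 zero_mem_uD
  have h1 : deriv D 0 = 0 := by
    rw [hev.deriv_eq, deriv_const]
  have h2 : ∀ z ∈ uD, zygS b D z = 0 := by
    intro z hz
    unfold zygS
    rw [deriv2_congr_uD hz hD, deriv_const', deriv_const]
    simp
  have himg : zygS b D '' uD = {0} := by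
    apply Set.eq_singleton_iff_unique_mem.2
    constructor
    · exact ⟨0, zero_mem_uD, h2 0 zero_mem_uD⟩
    · rintro x ⟨z, hz, rfl⟩
      exact h2 z hz
  unfold zNorm
  rw [himg, csSup_singleton, h0, h1]
  simp

lemma memZ_zero (a : ℝ) : memZ a (fun _ => (0:ℂ)) := by
  constructor
  · exact analyticOnNhd_const.analyticOn
  · refine ⟨0, fun z hz => ?_⟩
    unfold zygS
    rw [deriv_const', deriv_const]
    simp

lemma memZ_one (a : ℝ) : memZ a (fun _ => (1:ℂ)) := by
  constructor
  · exact analyticOnNhd_const.analyticOn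
  · refine ⟨0, fun z hz => ?_⟩
    unfold zygS
    rw [deriv_const', deriv_const]
    simp

lemma memZ_id (a : ℝ) : memZ a (fun w : ℂ => w) := by
  constructor
  · exact analyticOnNhd_id.analyticOn
  · refine ⟨0, fun z hz => ?_⟩
    unfold zygS
    have h1 : deriv (fun w : ℂ => w) = fun _ => (1:ℂ) := funext fun x => deriv_id x
    rw [h1, deriv_const]
    simp
theorem stmt_19 (α β : ℝ) (hα0 : 0 < α) (hα1 : α < 1) (hβ : 0 < β)
    (φ g : ℂ → ℂ) (hφ : AnalyticOn ℂ φ uD) (hφm : Set.MapsTo φ uD uD)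
    (hg : AnalyticOn ℂ g uD)
    (hbdd : boundedOp α β (CphiUg g φ)) :
    essNormZ α β (CphiUg g φ) = 0 := by
  have hφN : AnalyticOnNhd ℂ φ uD := (uD_open.analyticOn_iff_analyticOnNhd).1 hφ
  have hgN : AnalyticOnNhd ℂ g uD := (uD_open.analyticOn_iff_analyticOnNhd).1 hg
  obtain ⟨hmap, C, hCpos, hCle⟩ := hbdd
  set Kop : (ℂ → ℂ) → ℂ → ℂ := fun f => uD.indicator (CphiUg g φ f) with hKdef
  have hKeq : ∀ (f : ℂ → ℂ), ∀ y ∈ uD, Kop f y = CphiUg g φ f y :=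
    fun f y hy => Set.indicator_of_mem hy _
  have hφ0 : φ 0 ∈ uD := hφm zero_mem_uD
  -- (A) Kop maps Z^α into Z^β
  have hKmem : ∀ f, memZ α f → memZ β (Kop f) := by
    intro f hf
    have hTf := hmap f hf
    have hTfN := memZ_analyticOnNhd hTf
    constructor
    · apply AnalyticOnNhd.analyticOn
      intro z hz
      exact (hTfN z hz).congr ((eventuallyEq_of_eqOn_uD hz (hKeq f)).symm)
    · obtain ⟨M, hM⟩ := hTf.2
      refine ⟨M, fun z hz => ?_⟩
      have : zygS β (Kop f) z = zygS β (CphiUg g φ f) z := by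
        unfold zygS
        rw [deriv2_congr_uD hz (hKeq f)]
      rw [this]
      exact hM z hz
  -- (B) additivity
  have hKadd : ∀ f h, memZ α f → memZ α h → Kop (f + h) = Kop f + Kop h := by
    intro f h hf hh
    funext z
    by_cases hz : z ∈ uD
    · rw [Pi.add_apply, hKeq _ z hz, hKeq _ z hz, hKeq _ z hz]
      exact T_add (memZ_analyticOnNhd hf) (memZ_analyticOnNhd hh) hgN (hφm hz)
    · rw [Pi.add_apply]
      rw [hKdef]
      simp only [Set.indicator_of_notMem hz]
      ring
  -- (C) scalar multiplication
  have hKsmul : ∀ (c : ℂ) (f), memZ α f → Kop (c • f) = c • Kop f := by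
    intro c f _
    funext z
    by_cases hz : z ∈ uD
    · rw [Pi.smul_apply, smul_eq_mul, hKeq _ z hz, hKeq _ z hz]
      exact T_smul c z
    · rw [Pi.smul_apply, smul_eq_mul, hKdef]
      simp only [Set.indicator_of_notMem hz]
      ring
  -- constants from boundedness
  obtain ⟨Cg0, hCg0⟩ := (isCompact_closedBall (0:ℂ) ‖φ 0‖).exists_bound_of_continuousOn
    ((hgN.deriv.continuousOn).mono (by
      intro y hy
      rw [Metric.mem_closedBall, dist_zero_right] at hy
      exact mem_uD_iff.2 (lt_of_le_of_lt hy (mem_uD_iff.1 hφ0))))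
  have hCg0' : 0 ≤ Cg0 := le_trans (norm_nonneg (deriv g (φ 0)))
    (hCg0 _ (by rw [Metric.mem_closedBall, dist_zero_right]))
  set Cd0 : ℝ := ‖deriv g (φ 0)‖ * ‖deriv φ 0‖ with hCd0def
  have hCd0' : 0 ≤ Cd0 := by rw [hCd0def]; positivity
  set CQ : ℝ := zNorm β (CphiUg g φ (fun _ => 1)) with hCQdef
  set CT2 : ℝ := zNorm β (CphiUg g φ (fun w => w)) with hCT2def
  have hCQ0 : 0 ≤ CQ := zNorm_nonneg _ _
  have hB0 : 0 ≤ CT2 + CQ := by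
    have := zNorm_nonneg β (CphiUg g φ (fun w => w))
    rw [hCT2def]
    linarith
  -- pointwise weighted bounds for the two test functions
  have hQb : ∀ z ∈ uD, (1 - ‖z‖^2) ^ β * ‖deriv (deriv (CphiUg g φ (fun _ => 1))) z‖ ≤ CQ := by
    intro z hz
    exact zygS_le_zNorm (hmap _ (memZ_one α)) hz
  have hT2b : ∀ z ∈ uD, (1 - ‖z‖^2) ^ β * ‖deriv (deriv (CphiUg g φ (fun w => w))) z‖ ≤ CT2 := by
    intro z hz
    exact zygS_le_zNorm (hmap _ (memZ_id α)) hz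
  have hwpos : ∀ z : ℂ, z ∈ uD → 0 ≤ (1 - ‖z‖^2) ^ β := by
    intro z hz
    apply Real.rpow_nonneg
    have := mem_uD_iff.1 hz
    nlinarith [norm_nonneg z]
  have hWb : ∀ z ∈ uD, (1 - ‖z‖^2) ^ β *
      ‖deriv (deriv (CphiUg g φ (fun w => w))) z - φ z * deriv (deriv (CphiUg g φ (fun _ => 1))) z‖
        ≤ CT2 + CQ := by
    intro z hz
    have h1 := hQb z hz
    have h2 := hT2b z hz
    have hφz : ‖φ z‖ ≤ 1 := (mem_uD_iff.1 (hφm hz)).le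
    have hw := hwpos z hz
    have htri : ‖deriv (deriv (CphiUg g φ (fun w => w))) z
        - φ z * deriv (deriv (CphiUg g φ (fun _ => 1))) z‖
        ≤ ‖deriv (deriv (CphiUg g φ (fun w => w))) z‖
          + ‖deriv (deriv (CphiUg g φ (fun _ => 1))) z‖ := by
      calc ‖deriv (deriv (CphiUg g φ (fun w => w))) z
          - φ z * deriv (deriv (CphiUg g φ (fun _ => 1))) z‖
          ≤ ‖deriv (deriv (CphiUg g φ (fun w => w))) z‖
            + ‖φ z * deriv (deriv (CphiUg g φ (fun _ => 1))) z‖ := norm_sub_le _ _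
        _ ≤ _ := by
            rw [norm_mul]
            have h3 := norm_nonneg (deriv (deriv (CphiUg g φ (fun _ => 1))) z)
            nlinarith
    calc (1 - ‖z‖^2) ^ β * ‖deriv (deriv (CphiUg g φ (fun w => w))) z
        - φ z * deriv (deriv (CphiUg g φ (fun _ => 1))) z‖
        ≤ (1 - ‖z‖^2) ^ β * (‖deriv (deriv (CphiUg g φ (fun w => w))) z‖
          + ‖deriv (deriv (CphiUg g φ (fun _ => 1))) z‖) := mul_le_mul_of_nonneg_left htri hw
      _ = (1 - ‖z‖^2) ^ β * ‖deriv (deriv (CphiUg g φ (fun w => w))) z‖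
          + (1 - ‖z‖^2) ^ β * ‖deriv (deriv (CphiUg g φ (fun _ => 1))) z‖ := by ring
      _ ≤ CT2 + CQ := add_le_add h2 h1
  -- structural identities for the second derivatives of the test images
  have hq1 : ∀ z ∈ uD, deriv (deriv (CphiUg g φ (fun _ => 1))) z
      = deriv (deriv g) (φ z) * deriv φ z * deriv φ z
        + deriv g (φ z) * deriv (deriv φ) z := by
    intro z hz
    have h := deriv2_T hφN hφm hgN (analyticOnNhd_const (v := (1:ℂ))) hz
    have he : (fun y => (fun _ => (1:ℂ)) y * deriv g y) = deriv g := by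
      funext y; exact one_mul _
    rw [he] at h
    rw [h]
    ring
  have hWid : ∀ z ∈ uD, deriv (deriv (CphiUg g φ (fun w => w))) z
      - φ z * deriv (deriv (CphiUg g φ (fun _ => 1))) z
      = deriv g (φ z) * deriv φ z * deriv φ z := by
    intro z hz
    have h := deriv2_T hφN hφm hgN analyticOnNhd_id hz
    have hmul := deriv_mul_eq (f := fun w : ℂ => w) analyticOnNhd_id hgN (hφm hz)
    have hid : deriv (fun w : ℂ => w) (φ z) = 1 := deriv_id _
    rw [hid] at hmul
    rw [h, hmul, hq1 z hz]
    ring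
  -- master estimate
  have master : ∀ p q : ℂ → ℂ, memZ α p → memZ α q → ∀ S₀ S₁ : ℝ,
      (∀ w ∈ uD, ‖p w - q w‖ ≤ S₀) → (∀ w ∈ uD, ‖deriv p w - deriv q w‖ ≤ S₁) →
      zNorm β (fun z => Kop p z - Kop q z) ≤ (Cg0 + Cd0 + CQ) * S₀ + (CT2 + CQ) * S₁ := by
    intro p q hp hq S₀ S₁ hS₀ hS₁
    have hpN := memZ_analyticOnNhd hp
    have hqN := memZ_analyticOnNhd hq
    have hS₀0 : 0 ≤ S₀ := le_trans (norm_nonneg _) (hS₀ 0 zero_mem_uD)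
    have hS₁0 : 0 ≤ S₁ := le_trans (norm_nonneg _) (hS₁ 0 zero_mem_uD)
    have hDeq : ∀ y ∈ uD, (fun z => Kop p z - Kop q z) y
        = CphiUg g φ p y - CphiUg g φ q y := by
      intro y hy
      simp only
      rw [hKeq p y hy, hKeq q y hy]
    -- term 1 : value at 0
    have hterm1 : ‖Kop p 0 - Kop q 0‖ ≤ S₀ * Cg0 := by
      rw [hKeq p 0 zero_mem_uD, hKeq q 0 zero_mem_uD]
      show ‖CphiUg g φ p 0 - CphiUg g φ q 0‖ ≤ S₀ * Cg0
      unfold CphiUg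
      rw [← intervalIntegral.integral_sub (cont_integrand hpN hgN hφ0).intervalIntegrable
        (cont_integrand hqN hgN hφ0).intervalIntegrable]
      have hb : ∀ t ∈ Set.uIoc (0:ℝ) 1,
          ‖φ 0 * (p ((t:ℂ) * φ 0) * deriv g ((t:ℂ) * φ 0))
            - φ 0 * (q ((t:ℂ) * φ 0) * deriv g ((t:ℂ) * φ 0))‖ ≤ S₀ * Cg0 := by
        intro t ht
        rw [Set.uIoc_of_le zero_le_one] at ht
        have ht0 : 0 ≤ t := ht.1.le
        have htm : (t:ℂ) * φ 0 ∈ uD := smul_mem_uD ht0 ht.2 hφ0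
        have htcb : (t:ℂ) * φ 0 ∈ Metric.closedBall (0:ℂ) ‖φ 0‖ := by
          rw [Metric.mem_closedBall, dist_zero_right, norm_mul, Complex.norm_real,
            Real.norm_eq_abs, _root_.abs_of_nonneg ht0]
          nlinarith [norm_nonneg (φ 0), ht.2]
        have he : φ 0 * (p ((t:ℂ) * φ 0) * deriv g ((t:ℂ) * φ 0))
            - φ 0 * (q ((t:ℂ) * φ 0) * deriv g ((t:ℂ) * φ 0))
            = φ 0 * ((p ((t:ℂ) * φ 0) - q ((t:ℂ) * φ 0)) * deriv g ((t:ℂ) * φ 0)) := by ring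
        rw [he, norm_mul, norm_mul]
        have h1 : ‖φ 0‖ ≤ 1 := (mem_uD_iff.1 hφ0).le
        have h2 : ‖p ((t:ℂ) * φ 0) - q ((t:ℂ) * φ 0)‖ ≤ S₀ := hS₀ _ htm
        have h3 : ‖deriv g ((t:ℂ) * φ 0)‖ ≤ Cg0 := hCg0 _ htcb
        have n2 := norm_nonneg (p ((t:ℂ) * φ 0) - q ((t:ℂ) * φ 0))
        have n3 := norm_nonneg (deriv g ((t:ℂ) * φ 0))
        calc ‖φ 0‖ * (‖p ((t:ℂ) * φ 0) - q ((t:ℂ) * φ 0)‖ * ‖deriv g ((t:ℂ) * φ 0)‖)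
            ≤ 1 * (S₀ * Cg0) :=
              mul_le_mul h1 (mul_le_mul h2 h3 n3 hS₀0) (mul_nonneg n2 n3) zero_le_one
          _ = S₀ * Cg0 := one_mul _
      calc ‖∫ t in (0:ℝ)..1, (φ 0 * (p ((t:ℂ) * φ 0) * deriv g ((t:ℂ) * φ 0))
            - φ 0 * (q ((t:ℂ) * φ 0) * deriv g ((t:ℂ) * φ 0)))‖
          ≤ S₀ * Cg0 * |1 - 0| := intervalIntegral.norm_integral_le_of_norm_le_const hb
        _ = S₀ * Cg0 := by norm_num
    -- term 2 : derivative at 0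
    have hterm2 : ‖deriv (fun z => Kop p z - Kop q z) 0‖ ≤ S₀ * Cd0 := by
      have e1 := (eventuallyEq_of_eqOn_uD zero_mem_uD hDeq).deriv_eq
      have e2 : deriv (fun z => CphiUg g φ p z - CphiUg g φ q z) 0
          = (p (φ 0) * deriv g (φ 0)) * deriv φ 0 - (q (φ 0) * deriv g (φ 0)) * deriv φ 0 :=
        ((hasDerivAt_T hφN hφm hgN hpN zero_mem_uD).sub
          (hasDerivAt_T hφN hφm hgN hqN zero_mem_uD)).deriv
      rw [e1, e2]
      have he : (p (φ 0) * deriv g (φ 0)) * deriv φ 0 - (q (φ 0) * deriv g (φ 0)) * deriv φ 0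
          = ((p (φ 0) - q (φ 0)) * deriv g (φ 0)) * deriv φ 0 := by ring
      rw [he, norm_mul, norm_mul, hCd0def]
      have h2 : ‖p (φ 0) - q (φ 0)‖ ≤ S₀ := hS₀ _ hφ0
      have n1 := norm_nonneg (deriv g (φ 0))
      have n2 := norm_nonneg (deriv φ 0)
      nlinarith
    -- term 3 : weighted second derivative
    have hterm3 : ∀ z ∈ uD, zygS β (fun z => Kop p z - Kop q z) z
        ≤ CQ * S₀ + (CT2 + CQ) * S₁ := by
      intro z hz
      have hd1 : ∀ y ∈ uD, deriv (fun z => Kop p z - Kop q z) y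
          = (fun y => (fun x => (p x - q x) * deriv g x) (φ y) * deriv φ y) y := by
        intro y hy
        have e1 := (eventuallyEq_of_eqOn_uD hy hDeq).deriv_eq
        have e2 : deriv (fun z => CphiUg g φ p z - CphiUg g φ q z) y
            = (p (φ y) * deriv g (φ y)) * deriv φ y - (q (φ y) * deriv g (φ y)) * deriv φ y :=
          ((hasDerivAt_T hφN hφm hgN hpN hy).sub (hasDerivAt_T hφN hφm hgN hqN hy)).deriv
        rw [e1, e2]
        simp only
        ring
      have e3 := (eventuallyEq_of_eqOn_uD hz hd1).deriv_eq
      have e4 := (deriv_prod_formula (F := fun x => (p x - q x) * deriv g x)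
        ((hpN.sub hqN).mul hgN.deriv) hφN hφm hz).deriv
      have e6 := deriv_mul_eq (f := fun x => p x - q x) (hpN.sub hqN) hgN (hφm hz)
      have e7 : deriv (fun x => p x - q x) (φ z) = deriv p (φ z) - deriv q (φ z) :=
        (((hpN _ (hφm hz)).differentiableAt.hasDerivAt).sub
          ((hqN _ (hφm hz)).differentiableAt.hasDerivAt)).deriv
      have e8 : deriv (deriv (fun z => Kop p z - Kop q z)) z
          = (deriv p (φ z) - deriv q (φ z))
              * (deriv (deriv (CphiUg g φ (fun w => w))) z
                  - φ z * deriv (deriv (CphiUg g φ (fun _ => 1))) z)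
            + (p (φ z) - q (φ z)) * deriv (deriv (CphiUg g φ (fun _ => 1))) z := by
        rw [e3, e4, e6, e7, hWid z hz, hq1 z hz]
        ring
      unfold zygS
      rw [e8]
      have hφzD := hφm hz
      have h1 : ‖p (φ z) - q (φ z)‖ ≤ S₀ := hS₀ _ hφzD
      have h2 : ‖deriv p (φ z) - deriv q (φ z)‖ ≤ S₁ := hS₁ _ hφzD
      have hQz := hQb z hz
      have hWz := hWb z hz
      have hw := hwpos z hz
      have hn1 := norm_nonneg (deriv (deriv (CphiUg g φ (fun w => w))) z
        - φ z * deriv (deriv (CphiUg g φ (fun _ => 1))) z)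
      have hn2 := norm_nonneg (deriv (deriv (CphiUg g φ (fun _ => 1))) z)
      calc (1 - ‖z‖^2) ^ β * ‖(deriv p (φ z) - deriv q (φ z))
            * (deriv (deriv (CphiUg g φ (fun w => w))) z
                - φ z * deriv (deriv (CphiUg g φ (fun _ => 1))) z)
            + (p (φ z) - q (φ z)) * deriv (deriv (CphiUg g φ (fun _ => 1))) z‖
          ≤ (1 - ‖z‖^2) ^ β * (‖deriv p (φ z) - deriv q (φ z)‖
              * ‖deriv (deriv (CphiUg g φ (fun w => w))) z
                  - φ z * deriv (deriv (CphiUg g φ (fun _ => 1))) z‖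
            + ‖p (φ z) - q (φ z)‖ * ‖deriv (deriv (CphiUg g φ (fun _ => 1))) z‖) := by
            apply mul_le_mul_of_nonneg_left _ hw
            calc ‖(deriv p (φ z) - deriv q (φ z))
                  * (deriv (deriv (CphiUg g φ (fun w => w))) z
                      - φ z * deriv (deriv (CphiUg g φ (fun _ => 1))) z)
                  + (p (φ z) - q (φ z)) * deriv (deriv (CphiUg g φ (fun _ => 1))) z‖
                ≤ ‖(deriv p (φ z) - deriv q (φ z))
                    * (deriv (deriv (CphiUg g φ (fun w => w))) z
                        - φ z * deriv (deriv (CphiUg g φ (fun _ => 1))) z)‖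
                  + ‖(p (φ z) - q (φ z)) * deriv (deriv (CphiUg g φ (fun _ => 1))) z‖ :=
                  norm_add_le _ _
              _ = _ := by rw [norm_mul, norm_mul]
        _ = ‖deriv p (φ z) - deriv q (φ z)‖
              * ((1 - ‖z‖^2) ^ β * ‖deriv (deriv (CphiUg g φ (fun w => w))) z
                  - φ z * deriv (deriv (CphiUg g φ (fun _ => 1))) z‖)
            + ‖p (φ z) - q (φ z)‖
              * ((1 - ‖z‖^2) ^ β * ‖deriv (deriv (CphiUg g φ (fun _ => 1))) z‖) := by ring
        _ ≤ S₁ * (CT2 + CQ) + S₀ * CQ := by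
            apply add_le_add
            · apply mul_le_mul h2 hWz (by positivity) hS₁0
            · apply mul_le_mul h1 hQz (by positivity) hS₀0
        _ = CQ * S₀ + (CT2 + CQ) * S₁ := by ring
    -- assemble
    have hsup : sSup (zygS β (fun z => Kop p z - Kop q z) '' uD)
        ≤ CQ * S₀ + (CT2 + CQ) * S₁ := by
      apply csSup_le
      · exact ⟨_, ⟨0, zero_mem_uD, rfl⟩⟩
      · rintro x ⟨y, hy, rfl⟩
        exact hterm3 y hy
    unfold zNorm
    have hO : (fun z => Kop p z - Kop q z) 0 = Kop p 0 - Kop q 0 := rfl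
    rw [hO]
    calc ‖Kop p 0 - Kop q 0‖ + ‖deriv (fun z => Kop p z - Kop q z) 0‖
          + sSup (zygS β (fun z => Kop p z - Kop q z) '' uD)
        ≤ S₀ * Cg0 + S₀ * Cd0 + (CQ * S₀ + (CT2 + CQ) * S₁) :=
          add_le_add (add_le_add hterm1 hterm2) hsup
      _ = (Cg0 + Cd0 + CQ) * S₀ + (CT2 + CQ) * S₁ := by ring
  -- the Cauchy (compactness) property
  have hKcauchy : ∀ u : ℕ → ℂ → ℂ, (∀ n, memZ α (u n) ∧ zNorm α (u n) ≤ 1) →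
      ∃ σ : ℕ → ℕ, StrictMono σ ∧ ∀ ε > 0, ∃ N, ∀ m ≥ N, ∀ n ≥ N,
        zNorm β (fun z => Kop (u (σ m)) z - Kop (u (σ n)) z) ≤ ε := by
    intro u hu
    obtain ⟨σ, hσ, hconv⟩ := extraction hα0 hα1 u hu
    refine ⟨σ, hσ, ?_⟩
    intro ε hε
    have hA0 : 0 ≤ Cg0 + Cd0 + CQ := by linarith
    have hAB1 : (0:ℝ) < Cg0 + Cd0 + CQ + (CT2 + CQ) + 1 := by linarith
    obtain ⟨N, hN⟩ := hconv (ε / (Cg0 + Cd0 + CQ + (CT2 + CQ) + 1)) (by positivity)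
    refine ⟨N, fun m hm n hn => ?_⟩
    have h := master (u (σ m)) (u (σ n)) (hu _).1 (hu _).1 _ _
      (fun w hw => (hN m hm n hn w hw).1) (fun w hw => (hN m hm n hn w hw).2)
    calc zNorm β (fun z => Kop (u (σ m)) z - Kop (u (σ n)) z)
        ≤ (Cg0 + Cd0 + CQ) * (ε / (Cg0 + Cd0 + CQ + (CT2 + CQ) + 1))
          + (CT2 + CQ) * (ε / (Cg0 + Cd0 + CQ + (CT2 + CQ) + 1)) := h
      _ = (Cg0 + Cd0 + CQ + (CT2 + CQ)) * (ε / (Cg0 + Cd0 + CQ + (CT2 + CQ) + 1)) := by ring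
      _ ≤ (Cg0 + Cd0 + CQ + (CT2 + CQ) + 1) * (ε / (Cg0 + Cd0 + CQ + (CT2 + CQ) + 1)) := by
          apply mul_le_mul_of_nonneg_right (by linarith) (by positivity)
      _ = ε := by field_simp
  have hKcompact : compactOpZ α β Kop := ⟨hKmem, hKadd, hKsmul, hKcauchy⟩
  -- the operator T - Kop has zero norm
  have hzero : opNormZ α β (fun f z => CphiUg g φ f z - Kop f z) = 0 := by
    unfold opNormZ
    have hset : {r : ℝ | ∃ f, memZ α f ∧ zNorm α f ≤ 1
        ∧ r = zNorm β ((fun (f : ℂ → ℂ) (z : ℂ) => CphiUg g φ f z - Kop f z) f)} = {0} := by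
      apply Set.eq_singleton_iff_unique_mem.2
      constructor
      · refine ⟨fun _ => 0, memZ_zero α, ?_, ?_⟩
        · rw [zNorm_vanish (fun y _ => rfl)]
          exact zero_le_one
        · symm
          apply zNorm_vanish
          intro y hy
          simp only
          rw [hKeq _ y hy]
          ring
      · rintro x ⟨f, _, _, rfl⟩
        apply zNorm_vanish
        intro y hy
        simp only
        rw [hKeq _ y hy]
        ring
    rw [hset, csSup_singleton]
  -- conclusion
  unfold essNormZ
  have h0mem : (0:ℝ) ∈ {r : ℝ | ∃ K, compactOpZ α β K
      ∧ r = opNormZ α β (fun f z => CphiUg g φ f z - K f z)} := ⟨Kop, hKcompact, hzero.symm⟩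
  have hlb : ∀ x ∈ {r : ℝ | ∃ K, compactOpZ α β K
      ∧ r = opNormZ α β (fun f z => CphiUg g φ f z - K f z)}, (0:ℝ) ≤ x := by
    rintro x ⟨K, _, rfl⟩
    apply Real.sSup_nonneg
    rintro r ⟨f, _, _, rfl⟩
    exact zNorm_nonneg _ _
  apply le_antisymm
  · exact csInf_le ⟨0, hlb⟩ h0mem
  · exact le_csInf ⟨0, h0mem⟩ hlb
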